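/- Integral-inequality comparison lemma: let T > 0, let f : ℝ → ℝ be continuous and nondecreasing, and let I : [0,T] → ℝ be continuous and satisfy I(t) ≤ I(0) + ∫₀^t f(I(s)) ds for every t ∈ [0,T]. If f(I(0)) < 0, then I(t) ≤ I(0) + t · f(I(0)) for every t ∈ [0,T]. -/
import Mathlib


open MeasureTheory Real Topology Filter

/-- Integral-inequality comparison lemma. -/
theorem integral_comparison_lemma (T : ℝ) (hT : 0 < T)
    (f : ℝ → ℝ) (hfcont : Continuous f) (hfmono : Monotone f)
    (I : ℝ → ℝ) (hI : ContinuousOn I (Set.Icc 0 T))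
    (hineq : ∀ t ∈ Set.Icc (0 : ℝ) T, I t ≤ I 0 + ∫ s in (0 : ℝ)..t, f (I s))
    (hf0 : f (I 0) < 0) :
    ∀ t ∈ Set.Icc (0 : ℝ) T, I t ≤ I 0 + t * f (I 0) := by
  have hg : ContinuousOn (fun s => f (I s)) (Set.Icc 0 T) := hfcont.comp_continuousOn hI
  have hint : ∀ a b : ℝ, a ∈ Set.Icc (0:ℝ) T → b ∈ Set.Icc (0:ℝ) T →
      IntervalIntegrable (fun s => f (I s)) volume a b := by
    intro a b ha hb
    exact (hg.mono (Set.uIcc_subset_Icc ha hb)).intervalIntegrable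
  set S : Set ℝ := {t | t ∈ Set.Icc 0 T ∧ ∀ s ∈ Set.Icc 0 t, I s ≤ I 0} with hSdef
  have h0S : (0:ℝ) ∈ S := by
    refine ⟨⟨le_refl 0, hT.le⟩, ?_⟩
    intro s hs
    have : s = 0 := le_antisymm hs.2 hs.1
    simp [this]
  have hSne : S.Nonempty := ⟨0, h0S⟩
  have hSbdd : BddAbove S := ⟨T, fun t ht => ht.1.2⟩
  set u := sSup S with hu
  have hu0 : 0 ≤ u := le_csSup hSbdd h0S
  have huT : u ≤ T := csSup_le hSne fun t ht => ht.1.2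
  have hlt : ∀ s : ℝ, 0 ≤ s → s < u → I s ≤ I 0 := by
    intro s hs0 hsu
    obtain ⟨t, htS, hst⟩ := exists_lt_of_lt_csSup hSne hsu
    exact htS.2 s ⟨hs0, hst.le⟩
  have hIu : ∀ s ∈ Set.Icc (0:ℝ) u, I s ≤ I 0 := by
    intro s hs
    rcases lt_or_eq_of_le hs.2 with h | h
    · exact hlt s hs.1 h
    · subst h
      rcases eq_or_lt_of_le hu0 with h0 | h0
      · simp [← h0]
      · haveI : (𝓝[Set.Ico 0 u] u).NeBot := by
          refine mem_closure_iff_nhdsWithin_neBot.1 ?_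
          rw [closure_Ico h0.ne]
          exact Set.right_mem_Icc.2 h0.le
        have htend : Filter.Tendsto I (𝓝[Set.Ico 0 u] u) (𝓝 (I u)) :=
          ((hI u ⟨h0.le, huT⟩).mono (Set.Ico_subset_Icc_self.trans
            (Set.Icc_subset_Icc le_rfl huT)))
        refine le_of_tendsto htend ?_
        filter_upwards [self_mem_nhdsWithin] with r hr
        exact hlt r hr.1 hr.2
  have huT' : u = T := by
    by_contra hne
    have hult : u < T := lt_of_le_of_ne huT hne
    have hgu : f (I u) < 0 := lt_of_le_of_lt (hfmono (hIu u ⟨hu0, le_refl u⟩)) hf0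
    have hcw : ContinuousWithinAt (fun s => f (I s)) (Set.Icc 0 T) u := hg u ⟨hu0, huT⟩
    have hev : ∀ᶠ r in 𝓝[Set.Icc (0:ℝ) T] u, f (I r) < 0 :=
      hcw.eventually_lt_const hgu
    rw [eventually_nhdsWithin_iff, Metric.eventually_nhds_iff] at hev
    obtain ⟨δ, hδ, hball⟩ := hev
    set v := min (u + δ/2) T with hv
    have huv : u < v := lt_min (by linarith) hult
    have hvT : v ≤ T := min_le_right _ _
    have hvIcc : v ∈ Set.Icc (0:ℝ) T := ⟨hu0.trans huv.le, hvT⟩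
    have hvS : v ∈ S := by
      refine ⟨hvIcc, ?_⟩
      intro s hs
      by_cases hsu : s ≤ u
      · exact hIu s ⟨hs.1, hsu⟩
      · push_neg at hsu
        have hsT : s ∈ Set.Icc (0:ℝ) T := ⟨hs.1, hs.2.trans hvT⟩
        have h1 : I s ≤ I 0 + ∫ r in (0:ℝ)..s, f (I r) := hineq s hsT
        have hsplit : (∫ r in (0:ℝ)..s, f (I r))
            = (∫ r in (0:ℝ)..u, f (I r)) + ∫ r in u..s, f (I r) :=
          (intervalIntegral.integral_add_adjacent_intervals
            (hint 0 u ⟨le_refl 0, hT.le⟩ ⟨hu0, huT⟩)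
            (hint u s ⟨hu0, huT⟩ hsT)).symm
        have h2 : (∫ r in (0:ℝ)..u, f (I r)) ≤ ∫ r in (0:ℝ)..u, f (I 0) := by
          refine intervalIntegral.integral_mono_on hu0
            (hint 0 u ⟨le_refl 0, hT.le⟩ ⟨hu0, huT⟩) intervalIntegrable_const ?_
          intro r hr
          exact hfmono (hIu r hr)
        have h2' : (∫ r in (0:ℝ)..u, f (I 0)) = u * f (I 0) := by
          simp [intervalIntegral.integral_const, smul_eq_mul]
        have h3 : (∫ r in u..s, f (I r)) ≤ 0 := by
          have hptwise : ∀ r ∈ Set.Icc u s, f (I r) ≤ (0:ℝ) := by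
            intro r hr
            have hrT : r ∈ Set.Icc (0:ℝ) T := ⟨hu0.trans hr.1, hr.2.trans (hs.2.trans hvT)⟩
            have hdist : dist r u < δ := by
              rw [Real.dist_eq, abs_of_nonneg (by linarith [hr.1])]
              have : s ≤ u + δ/2 := hs.2.trans (min_le_left _ _)
              linarith [hr.2]
            exact (hball hdist hrT).le
          have := intervalIntegral.integral_mono_on hsu.le
            (hint u s ⟨hu0, huT⟩ hsT) intervalIntegrable_const hptwise
          simpa using this
        have hmul : u * f (I 0) ≤ 0 := mul_nonpos_of_nonneg_of_nonpos hu0 hf0.le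
        linarith
    have : v ≤ u := le_csSup hSbdd hvS
    linarith
  -- final conclusion
  intro t ht
  have hIle : ∀ s ∈ Set.Icc (0:ℝ) t, I s ≤ I 0 := by
    intro s hs
    exact hIu s ⟨hs.1, by rw [huT']; exact hs.2.trans ht.2⟩
  have h1 : I t ≤ I 0 + ∫ s in (0:ℝ)..t, f (I s) := hineq t ht
  have h2 : (∫ s in (0:ℝ)..t, f (I s)) ≤ ∫ s in (0:ℝ)..t, f (I 0) := by
    refine intervalIntegral.integral_mono_on ht.1
      (hint 0 t ⟨le_refl 0, hT.le⟩ ht) intervalIntegrable_const ?_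
    intro s hs
    exact hfmono (hIle s hs)
  have h3 : (∫ s in (0:ℝ)..t, f (I 0)) = t * f (I 0) := by
    simp [intervalIntegral.integral_const, smul_eq_mul]
  linarith
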